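/- Let (A,d) be a finite generalized metric space with more than one element that is not discrete (i.e., some two distinct points are at finite distance). Then A is not finitely presentable in the enriched sense in Met: the ω-chain of identity maps (A,d₁) → (A,d₂) → (A,d₃) → ⋯, where dₙ(x,y) = d(x,y) + 1/n for distinct x,y, has colimit (A,d), and the identity morphism of (A,d) does not factor through any colimit map id : (A,dₙ) → (A,d); hence A is not finitely presentable in the ordinary sense with respect to this particular chain, and Met(A,−) does not preserve filtered colimits. -/

import Mathlib

open CategoryTheory CategoryTheory.Limits ENNReal
open scoped Classical

/-- The category of generalized (extended-real-valued) metric spaces with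
nonexpanding (1-Lipschitz) maps. -/
structure MetCat : Type 1 where
  carrier : Type
  [str : EMetricSpace carrier]

attribute [instance] MetCat.str

instance : CoeSort MetCat Type := ⟨MetCat.carrier⟩

instance : Category MetCat where
  Hom X Y := {f : X.carrier → Y.carrier // LipschitzWith 1 f}
  id X := ⟨id, LipschitzWith.id⟩
  comp f g := ⟨g.1 ∘ f.1, (by simpa using g.2.comp f.2)⟩

/-- The category of generalized pseudometric spaces with nonexpanding maps. -/
structure PMetCat : Type 1 where
  carrier : Type
  [str : PseudoEMetricSpace carrier]

attribute [instance] PMetCat.str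

instance : CoeSort PMetCat Type := ⟨PMetCat.carrier⟩

instance : Category PMetCat where
  Hom X Y := {f : X.carrier → Y.carrier // LipschitzWith 1 f}
  id X := ⟨id, LipschitzWith.id⟩
  comp f g := ⟨g.1 ∘ f.1, (by simpa using g.2.comp f.2)⟩

/-- The full inclusion of metric spaces into pseudometric spaces. -/
def metToPMet : MetCat ⥤ PMetCat where
  obj X := ⟨X.carrier⟩
  map f := ⟨f.1, f.2⟩

/-- The sup-metric on the set of nonexpanding maps `X → Y`. -/
noncomputable instance MetCat.homEMetric (X Y : MetCat) : EMetricSpace (X ⟶ Y) where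
  edist f g := ⨆ x : X.carrier, edist (f.1 x) (g.1 x)
  edist_self f := by simp
  edist_comm f g := by simp [edist_comm]
  edist_triangle f g h :=
    iSup_le fun x => le_trans (edist_triangle _ (g.1 x) _)
      (add_le_add (le_iSup (fun x => edist (f.1 x) (g.1 x)) x)
        (le_iSup (fun x => edist (g.1 x) (h.1 x)) x))
  eq_of_edist_eq_zero := by
    intro f g h
    apply Subtype.ext
    funext x
    refine eq_of_edist_eq_zero (le_antisymm ?_ zero_le)
    calc edist (f.1 x) (g.1 x) ≤ ⨆ x : X.carrier, edist (f.1 x) (g.1 x) :=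
          le_iSup (fun x => edist (f.1 x) (g.1 x)) x
      _ = 0 := h

/-- The enriched hom-functor `Met(A, -) : Met ⥤ Met`, sending `Y` to the space of
nonexpanding maps `A → Y` with the sup-metric. -/
noncomputable def MetCat.enrichedHom (A : MetCat) : MetCat ⥤ MetCat where
  obj Y := ⟨A ⟶ Y⟩
  map f := ⟨fun g => g ≫ f, LipschitzWith.of_edist_le fun g h => by
    refine iSup_mono fun x => ?_
    have hf := f.2.edist_le_mul (g.1 x) (h.1 x)
    simp only [ENNReal.coe_one, one_mul] at hf
    exact hf⟩
  map_id Y := by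
    apply Subtype.ext
    funext g
    exact Category.comp_id g
  map_comp f k := by
    apply Subtype.ext
    funext g
    exact (Category.assoc g f k).symm

/-- The distance `d(x,y) + c` for distinct points, `0` on the diagonal. -/
noncomputable def shiftedDist {α : Type} [EMetricSpace α] (c : ℝ≥0∞) (x y : α) : ℝ≥0∞ :=
  if x = y then 0 else edist x y + c

lemma shiftedDist_self {α : Type} [EMetricSpace α] (c : ℝ≥0∞) (x : α) :
    shiftedDist c x x = 0 := if_pos rfl

lemma shiftedDist_comm {α : Type} [EMetricSpace α] (c : ℝ≥0∞) (x y : α) :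
    shiftedDist c x y = shiftedDist c y x := by
  unfold shiftedDist
  by_cases h : x = y
  · simp [h]
  · rw [if_neg h, if_neg (Ne.symm h), edist_comm]

lemma shiftedDist_triangle {α : Type} [EMetricSpace α] (c : ℝ≥0∞) (x y z : α) :
    shiftedDist c x z ≤ shiftedDist c x y + shiftedDist c y z := by
  unfold shiftedDist
  by_cases hxz : x = z
  · rw [if_pos hxz]; exact zero_le
  · rw [if_neg hxz]
    by_cases hxy : x = y
    · subst hxy
      rw [if_pos rfl, if_neg hxz, zero_add]
    · by_cases hyz : y = z
      · subst hyz
        rw [if_pos rfl, if_neg hxz, add_zero]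
      · rw [if_neg hxy, if_neg hyz]
        calc edist x z + c ≤ (edist x y + edist y z) + c :=
              add_le_add (edist_triangle x y z) le_rfl
          _ ≤ (edist x y + c) + (edist y z + c) := by
              rw [add_add_add_comm]
              exact add_le_add le_rfl le_self_add

lemma shiftedDist_eq_zero {α : Type} [EMetricSpace α] {c : ℝ≥0∞} (hc : c ≠ 0) {x y : α}
    (h : shiftedDist c x y = 0) : x = y := by
  by_contra hne
  rw [shiftedDist, if_neg hne] at h
  exact hc (add_eq_zero.mp h).2

lemma le_shiftedDist {α : Type} [EMetricSpace α] (c : ℝ≥0∞) (x y : α) :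
    edist x y ≤ shiftedDist c x y := by
  unfold shiftedDist
  by_cases hxy : x = y
  · simp [hxy]
  · rw [if_neg hxy]; exact le_self_add

lemma shiftedDist_mono {α : Type} [EMetricSpace α] {c c' : ℝ≥0∞} (h : c' ≤ c) (x y : α) :
    shiftedDist c' x y ≤ shiftedDist c x y := by
  unfold shiftedDist
  by_cases hxy : x = y
  · simp [hxy]
  · rw [if_neg hxy, if_neg hxy]
    exact add_le_add le_rfl h

/-- The metric `d(x,y) + c` (for distinct points) obtained by inflating a generalized
metric by a positive constant `c`. -/
noncomputable def shiftedEMetric (α : Type) [EMetricSpace α] (c : ℝ≥0∞) (hc : c ≠ 0) :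
    EMetricSpace α where
  edist := shiftedDist c
  edist_self := shiftedDist_self c
  edist_comm := shiftedDist_comm c
  edist_triangle := shiftedDist_triangle c
  eq_of_edist_eq_zero := fun h => shiftedDist_eq_zero hc h

/-- The `n`-th space `(A, dₙ)` of the chain, where `dₙ(x,y) = d(x,y) + 1/(n+1)`
for distinct `x`, `y`. -/
noncomputable def MetCat.chainObj (A : MetCat) (n : ℕ) : MetCat :=
  @MetCat.mk A.carrier (shiftedEMetric A.carrier ((n + 1 : ℝ≥0∞))⁻¹
      (ENNReal.inv_ne_zero.mpr (by simp)))

/-- The identity map `(A,dₙ) → (A,dₘ)` for `n ≤ m`, which is nonexpanding. -/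
noncomputable def MetCat.chainMap (A : MetCat) {n m : ℕ} (h : n ≤ m) :
    MetCat.chainObj A n ⟶ MetCat.chainObj A m := by
  refine ⟨id, LipschitzWith.of_edist_le fun x y => ?_⟩
  have hc : ((m + 1 : ℝ≥0∞))⁻¹ ≤ ((n + 1 : ℝ≥0∞))⁻¹ := by
    refine ENNReal.inv_le_inv.mpr (add_le_add ?_ le_rfl)
    exact_mod_cast Nat.cast_le.mpr h
  exact @shiftedDist_mono A.carrier A.str _ _ hc x y

/-- The `ω`-chain `(A,d₁) → (A,d₂) → ⋯` of identity maps. -/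
noncomputable def MetCat.chain (A : MetCat) : ℕ ⥤ MetCat where
  obj n := MetCat.chainObj A n
  map {n m} h := MetCat.chainMap A (leOfHom h)
  map_id n := Subtype.ext rfl
  map_comp f g := Subtype.ext rfl

/-- The cocone of identity maps `(A,dₙ) → (A,d)` over the chain. -/
noncomputable def MetCat.chainCocone (A : MetCat) : Cocone (MetCat.chain A) where
  pt := A
  ι :=
    { app := fun n => ⟨id, LipschitzWith.of_edist_le fun x y =>
        @le_shiftedDist A.carrier A.str ((n + 1 : ℝ≥0∞))⁻¹ x y⟩
      naturality := fun n m h => Subtype.ext rfl }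

lemma shiftedDist_le_add {α : Type} [EMetricSpace α] (c : ℝ≥0∞) (x y : α) :
    shiftedDist c x y ≤ edist x y + c := by
  unfold shiftedDist
  by_cases hxy : x = y
  · simp [hxy]
  · rw [if_neg hxy]

lemma ennreal_le_of_forall_add_inv {a b : ℝ≥0∞}
    (h : ∀ n : ℕ, a ≤ b + ((n + 1 : ℝ≥0∞))⁻¹) : a ≤ b := by
  refine ENNReal.le_of_forall_pos_le_add fun ε hε _ => ?_
  obtain ⟨n, hn⟩ := ENNReal.exists_inv_nat_lt (by exact_mod_cast hε.ne' : (ε : ℝ≥0∞) ≠ 0)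
  exact (h n).trans (add_le_add le_rfl ((ENNReal.inv_le_inv.mpr (by simp)).trans hn.le))

lemma MetCat.cocone_app_eq (A : MetCat) (c : Cocone (MetCat.chain A)) (n : ℕ) :
    (c.ι.app n).1 = (c.ι.app 0).1 := by
  have h := congrArg Subtype.val (c.ι.naturality (homOfLE (Nat.zero_le n)))
  exact h

/-- The cocone of identities `(A,dₙ) → (A,d)` is a colimit cocone. -/
noncomputable def MetCat.chainIsColimit (A : MetCat) : IsColimit (MetCat.chainCocone A) where
  desc c := ⟨(c.ι.app 0).1, LipschitzWith.of_edist_le fun x y => by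
    refine ennreal_le_of_forall_add_inv fun n => ?_
    have h1 : edist ((c.ι.app n).1 x) ((c.ι.app n).1 y) ≤
        shiftedDist ((n + 1 : ℝ≥0∞))⁻¹ x y := by
      have := (c.ι.app n).2.edist_le_mul x y
      simp only [ENNReal.coe_one, one_mul] at this
      exact this
    rw [MetCat.cocone_app_eq A c n] at h1
    exact h1.trans (shiftedDist_le_add _ x y)⟩
  fac c n := by
    apply Subtype.ext
    funext x
    exact (congrFun (MetCat.cocone_app_eq A c n) x).symm
  uniq c m h := by
    apply Subtype.ext
    funext x
    exact congrFun (congrArg Subtype.val (h 0)) x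

/-- A finite generalized metric space with more than one element which is
not discrete (some two distinct points are at finite distance) is not finitely presentable:
the chain `(A,d₁) → (A,d₂) → ⋯` of identities has colimit `(A,d)`, the identity of `(A,d)`
does not factor through any colimit map `(A,dₙ) → (A,d)`, and the enriched hom-functor
`Met(A,-)` does not preserve filtered colimits. -/
theorem finite_nondiscrete_not_finitely_presentable
    (A : MetCat) [Finite A.carrier]
    (hnd : ∃ x y : A.carrier, x ≠ y ∧ edist x y ≠ ⊤) :
    Nonempty (IsColimit (MetCat.chainCocone A)) ∧
    (¬ ∃ (n : ℕ) (g : A ⟶ (MetCat.chain A).obj n),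
        g ≫ (MetCat.chainCocone A).ι.app n = 𝟙 A) ∧
    ¬ (∀ (J : Type) [SmallCategory J] [IsFiltered J],
        Nonempty (PreservesColimitsOfShape J (MetCat.enrichedHom A))) := by
  have isColim := MetCat.chainIsColimit A
  have part2 : ¬ ∃ (n : ℕ) (g : A ⟶ (MetCat.chain A).obj n),
      g ≫ (MetCat.chainCocone A).ι.app n = 𝟙 A := by
    rintro ⟨n, g, hg⟩
    obtain ⟨x, y, hxy, hfin⟩ := hnd
    have hgid : g.1 = id := congrArg Subtype.val hg
    have hle := g.2.edist_le_mul x y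
    rw [ENNReal.coe_one, one_mul, hgid] at hle
    have h2 : shiftedDist ((n + 1 : ℝ≥0∞))⁻¹ x y ≤ edist x y := hle
    rw [shiftedDist, if_neg hxy] at h2
    have h2' : edist x y + ((n + 1 : ℝ≥0∞))⁻¹ ≤ edist x y + 0 := by
      rw [add_zero]; exact h2
    have h3 := (ENNReal.add_le_add_iff_left hfin).mp h2'
    simp at h3
  refine ⟨⟨isColim⟩, part2, ?_⟩
  intro H
  obtain ⟨P⟩ := H ℕ
  haveI := P
  have hc : IsColimit ((MetCat.enrichedHom A).mapCocone (MetCat.chainCocone A)) :=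
    isColimitOfPreserves (MetCat.enrichedHom A) isColim
  -- the subspace of `Met(A,A)` of maps factoring through some stage of the chain
  let U : MetCat := ⟨{f : A ⟶ A // ∃ (n : ℕ) (g : A ⟶ (MetCat.chain A).obj n),
      g ≫ (MetCat.chainCocone A).ι.app n = f}⟩
  let D : Cocone (MetCat.chain A ⋙ MetCat.enrichedHom A) :=
    { pt := U
      ι :=
        { app := fun n => ⟨fun g => ⟨g ≫ (MetCat.chainCocone A).ι.app n, n, g, rfl⟩,
            LipschitzWith.of_edist_le fun g h => by
              rw [Subtype.edist_eq]
              exact iSup_mono fun x => @le_shiftedDist A.carrier A.str _ (g.1 x) (h.1 x)⟩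
          naturality := fun n m f => Subtype.ext (funext fun g =>
            Subtype.ext (Subtype.ext rfl)) } }
  let incl : U ⟶ (MetCat.enrichedHom A).obj A :=
    ⟨fun u => u.1, LipschitzWith.of_edist_le fun u v => le_of_eq (Subtype.edist_eq u v).symm⟩
  have hmi : hc.desc D ≫ incl = 𝟙 _ := by
    refine hc.hom_ext fun n => ?_
    rw [← Category.assoc, hc.fac D n]
    exact Subtype.ext rfl
  have hid : ((hc.desc D).1 (𝟙 A)).1 = 𝟙 A :=
    congrFun (congrArg Subtype.val hmi) (𝟙 A)
  obtain ⟨n, g, hg⟩ := ((hc.desc D).1 (𝟙 A)).2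
  exact part2 ⟨n, g, hg.trans hid⟩
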